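/- Let f and g be polynomials with complex coefficients, deg f = m, deg g = n. Suppose f has a zero of multiplicity r at 0 (0 ≤ r ≤ m), with remaining zeros (with multiplicity) α₁,…,α_{m−r}, all nonzero. Let K be the convex hull of the zeros of g, and let h be the polynomial f(D)g obtained by substituting the differentiation operator D for z in f. Then either h is identically zero, or every zero of h lies in the set K + ∑_{i=1}^{m−r} [0, n−r]·αᵢ⁻¹. -/

import Mathlib

open Finset

open Polynomial

private lemma eval_derivative_prod_roots (s : Multiset ℂ) (z : ℂ) (hz : ∀ r ∈ s, z ≠ r) :
    (Polynomial.derivative (s.map (fun r => X - C r)).prod).eval z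
      = ((s.map (fun r => X - C r)).prod).eval z * (s.map (fun r => (z - r)⁻¹)).sum := by
  induction s using Multiset.induction with
  | empty => simp
  | cons r s ih =>
    have hzr : z - r ≠ 0 := sub_ne_zero.mpr (hz r (Multiset.mem_cons_self r s))
    have ih' := ih (fun r' hr' => hz r' (Multiset.mem_cons_of_mem hr'))
    simp only [Multiset.map_cons, Multiset.prod_cons, Multiset.sum_cons, derivative_mul,
      derivative_sub, derivative_X, derivative_C, sub_zero, one_mul, eval_add, eval_mul,
      eval_sub, eval_X, eval_C, ih']
    field_simp

private lemma key (p : Polynomial ℂ) (hp : p ≠ 0) (hd : 0 < p.natDegree) (α z : ℂ)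
    (hz : (Polynomial.derivative p).eval z = α * p.eval z) :
    ∃ w ∈ convexHull ℝ (p.roots.toFinset : Set ℂ), ∃ t : ℝ,
      0 ≤ t ∧ t ≤ (p.natDegree : ℝ) ∧ z = w + (t : ℂ) * α⁻¹ := by
  classical
  by_cases hpz : p.eval z = 0
  · refine ⟨z, subset_convexHull ℝ _ ?_, 0, le_refl 0, by positivity, by simp⟩
    simp only [Finset.mem_coe, Multiset.mem_toFinset]
    rw [mem_roots hp]; exact hpz
  · set s := p.roots with hs
    have hsplit : Multiset.card s = p.natDegree :=
      splits_iff_card_roots.mp (IsAlgClosed.splits p)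
    have hzr : ∀ r ∈ s, z ≠ r := by
      intro r hrs hzr; subst hzr; exact hpz ((mem_roots hp).mp hrs)
    have hfac := (IsAlgClosed.splits p).eq_prod_roots
    set T : Polynomial ℂ := (s.map fun r => X - C r).prod with hT
    have hlc : p.leadingCoeff ≠ 0 := leadingCoeff_ne_zero.mpr hp
    have h1 : p.eval z = p.leadingCoeff * T.eval z := by
      conv_lhs => rw [hfac]
      simp [eval_mul]
    have h2 : (Polynomial.derivative p).eval z
        = p.leadingCoeff * (Polynomial.derivative T).eval z := by
      conv_lhs => rw [hfac]
      simp [derivative_C_mul, eval_mul]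
    have hTz : T.eval z ≠ 0 := by
      intro h0; exact hpz (by rw [h1, h0, mul_zero])
    have h3 := eval_derivative_prod_roots s z hzr
    have hsum : (s.map (fun r => (z - r)⁻¹)).sum = α := by
      have h4 : p.leadingCoeff * (T.eval z * (s.map (fun r => (z - r)⁻¹)).sum)
          = α * (p.leadingCoeff * T.eval z) := by
        rw [← h3, ← h2, ← h1]; exact hz
      apply mul_left_cancel₀ (mul_ne_zero hlc hTz)
      linear_combination h4
    -- Finset version
    set F := s.toFinset with hF
    have hsumF : ∑ r ∈ F, (s.count r : ℂ) * (z - r)⁻¹ = α := by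
      rw [← hsum, Finset.sum_multiset_map_count]
      simp [nsmul_eq_mul, hF]
    set ww : ℂ → ℝ := fun r => (s.count r : ℝ) * (Complex.normSq (z - r))⁻¹ with hww
    have hwnn : ∀ r ∈ F, 0 ≤ ww r := fun r _ =>
      mul_nonneg (Nat.cast_nonneg _) (inv_nonneg.mpr (Complex.normSq_nonneg _))
    set W : ℝ := ∑ r ∈ F, ww r with hW
    have hFne : F.Nonempty := by
      rw [hF, Multiset.toFinset_nonempty]
      intro h0
      rw [h0] at hsplit; simp at hsplit; omega
    have hWpos : 0 < W := by
      obtain ⟨r₀, hr₀⟩ := hFne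
      refine Finset.sum_pos' hwnn ⟨r₀, hr₀, ?_⟩
      have hc : 0 < s.count r₀ := Multiset.count_pos.mpr (Multiset.mem_toFinset.mp hr₀)
      have hne : z - r₀ ≠ 0 := sub_ne_zero.mpr (hzr r₀ (Multiset.mem_toFinset.mp hr₀))
      exact mul_pos (by exact_mod_cast hc) (inv_pos.mpr (Complex.normSq_pos.mpr hne))
    have hWne : (W : ℂ) ≠ 0 := Complex.ofReal_ne_zero.mpr hWpos.ne'
    set w : ℂ := F.centerMass ww id with hwdef
    have hwmem : w ∈ convexHull ℝ (F : Set ℂ) :=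
      Finset.centerMass_mem_convexHull F hwnn hWpos (fun i hi => Finset.mem_coe.mpr hi)
    have hconj : ∑ r ∈ F, (ww r : ℂ) * (z - r) = (starRingEnd ℂ) α := by
      have hc := congrArg (starRingEnd ℂ) hsumF
      rw [map_sum] at hc
      rw [← hc]
      refine Finset.sum_congr rfl fun r hr => ?_
      have hur : (z - r) ≠ 0 := sub_ne_zero.mpr (hzr r (Multiset.mem_toFinset.mp hr))
      rw [map_mul, map_inv₀, Complex.inv_def, Complex.normSq_conj, Complex.conj_conj,
        map_natCast]
      rw [hww]
      push_cast
      ring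
    have hcm : (W : ℂ) * w = ∑ r ∈ F, (ww r : ℂ) * r := by
      have hw2 : w = (W : ℂ)⁻¹ * ∑ r ∈ F, (ww r : ℂ) * r := by
        rw [hwdef, hW]
        simp only [Finset.centerMass, id, Complex.real_smul]
        push_cast
        ring
      rw [hw2, ← mul_assoc, mul_inv_cancel₀ hWne, one_mul]
    have hzw : z = w + (W : ℂ)⁻¹ * (starRingEnd ℂ) α := by
      have hexp : ∑ r ∈ F, (ww r : ℂ) * (z - r) = (W : ℂ) * z - (W : ℂ) * w := by
        rw [hcm]
        rw [show (W : ℂ) = ∑ r ∈ F, (ww r : ℂ) by push_cast [hW]; ring]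
        rw [Finset.sum_mul, ← Finset.sum_sub_distrib]
        exact Finset.sum_congr rfl fun r _ => by ring
      rw [hconj] at hexp
      field_simp [hWne] at hexp ⊢
      linear_combination -hexp
    refine ⟨w, ?_, Complex.normSq α / W, div_nonneg (Complex.normSq_nonneg α) hWpos.le, ?_, ?_⟩
    · exact hwmem
    · -- t ≤ natDegree
      set S : ℝ := ∑ r ∈ F, (s.count r : ℝ) * ‖z - r‖⁻¹ with hS
      have hnorm : ‖α‖ ≤ S := by
        have hb := norm_sum_le F (fun r => (s.count r : ℂ) * (z - r)⁻¹)
        rw [hsumF] at hb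
        refine hb.trans_eq (Finset.sum_congr rfl fun r _ => ?_)
        rw [norm_mul, norm_inv, Complex.norm_natCast]
      have hcs : S ^ 2 ≤ (p.natDegree : ℝ) * W := by
        have h5 := Finset.sum_mul_sq_le_sq_mul_sq F (fun r => Real.sqrt (s.count r))
          (fun r => Real.sqrt (s.count r) * ‖z - r‖⁻¹)
        have e1 : ∀ r ∈ F, Real.sqrt (s.count r) * (Real.sqrt (s.count r) * ‖z - r‖⁻¹)
            = (s.count r : ℝ) * ‖z - r‖⁻¹ := fun r _ => by
          rw [← mul_assoc, Real.mul_self_sqrt (by positivity)]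
        have e2 : ∀ r ∈ F, Real.sqrt (s.count r) ^ 2 = (s.count r : ℝ) := fun r _ =>
          Real.sq_sqrt (by positivity)
        have e3 : ∀ r ∈ F, (Real.sqrt (s.count r) * ‖z - r‖⁻¹) ^ 2 = ww r := fun r _ => by
          rw [mul_pow, Real.sq_sqrt (by positivity), hww]
          congr 1
          rw [inv_pow]
          congr 1
          rw [← Complex.sq_norm]
        rw [Finset.sum_congr rfl e1, Finset.sum_congr rfl e2, Finset.sum_congr rfl e3] at h5
        have e4 : ∑ r ∈ F, (s.count r : ℝ) = (p.natDegree : ℝ) := by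
          rw [← hsplit, ← Multiset.toFinset_sum_count_eq s]
          push_cast
          rfl
        rw [e4] at h5
        exact h5
      have habs : Complex.normSq α ≤ (p.natDegree : ℝ) * W := by
        have : Complex.normSq α = ‖α‖ ^ 2 := by
          rw [← Complex.sq_norm]
        rw [this]
        exact (pow_le_pow_left₀ (norm_nonneg _) hnorm 2).trans hcs
      rw [div_le_iff₀ hWpos]
      exact habs
    · -- z = w + t * α⁻¹
      by_cases hα : α = 0
      · subst hα
        simp only [map_zero, mul_zero, add_zero] at hzw
        simp [hzw, Complex.normSq_zero]
      · have hα2 : (Complex.normSq α : ℂ) ≠ 0 := by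
          exact_mod_cast (Complex.normSq_pos.mpr hα).ne'
        have h6 : ((Complex.normSq α : ℝ) : ℂ) * (((Complex.normSq α : ℝ) : ℂ))⁻¹ = 1 :=
          mul_inv_cancel₀ hα2
        rw [hzw]
        congr 1
        rw [Complex.inv_def α]
        push_cast
        linear_combination (-1 : ℂ) * ((W:ℂ))⁻¹ * (starRingEnd ℂ) α * h6

private lemma gaussLucas (g : Polynomial ℂ) :
    ∀ j, Polynomial.derivative^[j] g ≠ 0 → ∀ z, (Polynomial.derivative^[j] g).eval z = 0 →
      z ∈ convexHull ℝ (g.roots.toFinset : Set ℂ) := by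
  intro j
  induction j with
  | zero =>
    intro hg z hz
    refine subset_convexHull ℝ _ ?_
    simp only [Finset.mem_coe, Multiset.mem_toFinset]
    rw [mem_roots (by simpa using hg)]
    simpa using hz
  | succ j ih =>
    intro hg z hz
    rw [Function.iterate_succ_apply'] at hg hz
    set q := Polynomial.derivative^[j] g with hq
    have hq0 : q ≠ 0 := by
      intro h0; rw [h0] at hg; simp at hg
    have hdq : 0 < q.natDegree := by
      rcases Nat.eq_zero_or_pos q.natDegree with h0 | h0
      · exact absurd (derivative_of_natDegree_zero h0) hg
      · exact h0
    obtain ⟨w, hw, t, _, _, hzw⟩ := key q hq0 hdq 0 z (by rw [hz, zero_mul])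
    rw [inv_zero, mul_zero, add_zero] at hzw
    subst hzw
    have hsub : (q.roots.toFinset : Set ℂ) ⊆ convexHull ℝ (g.roots.toFinset : Set ℂ) := by
      intro x hx
      simp only [Finset.mem_coe, Multiset.mem_toFinset, mem_roots hq0] at hx
      exact ih hq0 x hx
    exact convexHull_min hsub (convex_convexHull ℝ _) hw

private lemma stepB (q : Polynomial ℂ) (hq : q ≠ 0) (β : ℂ) (hβ : β ≠ 0) :
    Polynomial.derivative q - C β * q ≠ 0 ∧
      (Polynomial.derivative q - C β * q).natDegree = q.natDegree := by
  rcases Nat.eq_zero_or_pos q.natDegree with h0 | h0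
  · obtain ⟨c, rfl⟩ := natDegree_eq_zero.mp h0
    have hc : c ≠ 0 := fun h => hq (by simp [h])
    constructor
    · rw [derivative_C, zero_sub, ← C_mul, neg_ne_zero, Ne, C_eq_zero]
      exact mul_ne_zero hβ hc
    · rw [derivative_C, zero_sub, ← C_mul, natDegree_neg, natDegree_C, natDegree_C]
  · have hlt : (Polynomial.derivative q).natDegree < (C β * q).natDegree := by
      rw [natDegree_C_mul hβ]
      exact natDegree_derivative_lt h0.ne'
    refine ⟨?_, ?_⟩
    · intro hz
      rw [sub_eq_zero] at hz
      rw [hz] at hlt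
      exact lt_irrefl _ hlt
    · rw [natDegree_sub_eq_right_of_natDegree_lt hlt, natDegree_C_mul hβ]

private lemma convexA (K : Set ℂ) (hK : Convex ℝ K) (k : ℕ) (β : Fin k → ℂ) (N : ℝ) :
    Convex ℝ {x : ℂ | ∃ w ∈ K, ∃ t : Fin k → ℝ,
      (∀ i, 0 ≤ t i ∧ t i ≤ N) ∧ x = w + ∑ i, ((t i : ℂ) * (β i)⁻¹)} := by
  rintro x ⟨w1, hw1, t1, ht1, rfl⟩ y ⟨w2, hw2, t2, ht2, rfl⟩ a b ha hb hab
  refine ⟨a • w1 + b • w2, hK hw1 hw2 ha hb hab, fun i => a * t1 i + b * t2 i, ?_, ?_⟩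
  · intro i
    constructor
    · have := (ht1 i).1; have := (ht2 i).1
      positivity
    · calc a * t1 i + b * t2 i ≤ a * N + b * N := by
            gcongr
            · exact (ht1 i).2
            · exact (ht2 i).2
        _ = N := by rw [← add_mul, hab, one_mul]
  · have hsum : ∑ i, (((a * t1 i + b * t2 i : ℝ) : ℂ) * (β i)⁻¹)
        = (a : ℂ) * ∑ i, ((t1 i : ℂ) * (β i)⁻¹) + (b : ℂ) * ∑ i, ((t2 i : ℂ) * (β i)⁻¹) := by
      rw [Finset.mul_sum, Finset.mul_sum, ← Finset.sum_add_distrib]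
      refine Finset.sum_congr rfl fun i _ => ?_
      push_cast
      ring
    simp only [Complex.real_smul, smul_add]
    rw [hsum]
    ring

private lemma prodB : ∀ (k : ℕ) (β : Fin k → ℂ), (∀ i, β i ≠ 0) → ∀ (q : Polynomial ℂ), q ≠ 0 →
    ((Polynomial.aeval (Polynomial.derivative : Module.End ℂ (Polynomial ℂ))
        (∏ i, (X - C (β i)))) q) ≠ 0 ∧
    ((Polynomial.aeval (Polynomial.derivative : Module.End ℂ (Polynomial ℂ))
        (∏ i, (X - C (β i)))) q).natDegree = q.natDegree ∧
    ∀ z, ((Polynomial.aeval (Polynomial.derivative : Module.End ℂ (Polynomial ℂ))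
        (∏ i, (X - C (β i)))) q).eval z = 0 →
      ∃ w ∈ convexHull ℝ (q.roots.toFinset : Set ℂ), ∃ t : Fin k → ℝ,
        (∀ i, 0 ≤ t i ∧ t i ≤ (q.natDegree : ℝ)) ∧ z = w + ∑ i, ((t i : ℂ) * (β i)⁻¹) := by
  intro k
  induction k with
  | zero =>
    intro β hβ q hq
    have h1 : (Polynomial.aeval (Polynomial.derivative : Module.End ℂ (Polynomial ℂ))
        (∏ i : Fin 0, (X - C (β i)))) q = q := by
      simp only [Finset.univ_eq_empty, Finset.prod_empty, map_one, Module.End.one_apply]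
    rw [h1]
    refine ⟨hq, rfl, fun z hz => ?_⟩
    refine ⟨z, subset_convexHull ℝ _ ?_, fun _ => 0, fun i => i.elim0, by simp⟩
    simp only [Finset.mem_coe, Multiset.mem_toFinset]
    rw [mem_roots hq]
    exact hz
  | succ k ih =>
    intro β hβ q hq
    obtain ⟨hQ'ne, hQ'deg, hQ'roots⟩ := ih (β ∘ Fin.succ) (fun i => hβ _) q hq
    set Q' := (Polynomial.aeval (Polynomial.derivative : Module.End ℂ (Polynomial ℂ))
        (∏ i, (X - C ((β ∘ Fin.succ) i)))) q with hQ'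
    have happ : (Polynomial.aeval (Polynomial.derivative : Module.End ℂ (Polynomial ℂ))
        (∏ i, (X - C (β i)))) q
        = Polynomial.derivative Q' - C (β 0) * Q' := by
      rw [Fin.prod_univ_succ, map_mul, Module.End.mul_apply, hQ']
      rw [map_sub, Polynomial.aeval_X, Polynomial.aeval_C, LinearMap.sub_apply,
        Module.algebraMap_end_apply, smul_eq_C_mul]
      rfl
    obtain ⟨hne, hdeg⟩ := stepB Q' hQ'ne (β 0) (hβ 0)
    refine ⟨by rw [happ]; exact hne, by rw [happ, hdeg, hQ'deg], ?_⟩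
    intro z hz
    rw [happ] at hz
    rw [eval_sub, sub_eq_zero, eval_mul, eval_C] at hz
    have hdpos : 0 < Q'.natDegree := by
      rcases Nat.eq_zero_or_pos Q'.natDegree with h0 | h0
      · exfalso
        obtain ⟨c, hc⟩ := natDegree_eq_zero.mp h0
        have hc0 : c ≠ 0 := fun hcc => hQ'ne (by rw [← hc, hcc, map_zero])
        rw [← hc] at hz
        simp only [derivative_C, eval_zero, eval_C] at hz
        exact absurd hz.symm (mul_ne_zero (hβ 0) hc0)
      · exact h0
    obtain ⟨w₁, hw₁, t₀, ht₀0, ht₀N, hzeq⟩ := key Q' hQ'ne hdpos (β 0) z hz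
    have hconv := convexA _ (convex_convexHull ℝ (q.roots.toFinset : Set ℂ)) k
      (β ∘ Fin.succ) (q.natDegree : ℝ)
    have hsub : (Q'.roots.toFinset : Set ℂ) ⊆ {x : ℂ |
        ∃ w ∈ convexHull ℝ (q.roots.toFinset : Set ℂ), ∃ t : Fin k → ℝ,
        (∀ i, 0 ≤ t i ∧ t i ≤ (q.natDegree : ℝ))
          ∧ x = w + ∑ i, ((t i : ℂ) * ((β ∘ Fin.succ) i)⁻¹)} := by
      intro x hx
      simp only [Finset.mem_coe, Multiset.mem_toFinset, mem_roots hQ'ne] at hx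
      exact hQ'roots x hx
    have hw₁A := convexHull_min hsub hconv hw₁
    obtain ⟨w, hw, t', ht', hw₁eq⟩ := hw₁A
    refine ⟨w, hw, Fin.cons t₀ t', ?_, ?_⟩
    · intro i
      refine Fin.cases ?_ ?_ i
      · refine ⟨by simpa using ht₀0, ?_⟩
        rw [Fin.cons_zero]
        rw [hQ'deg] at ht₀N
        exact ht₀N
      · intro j
        simpa using ht' j
    · rw [Fin.sum_univ_succ]
      simp only [Fin.cons_zero, Fin.cons_succ]
      rw [hzeq, hw₁eq]
      simp only [Function.comp_apply]
      ring

private lemma iter_deg (p : Polynomial ℂ) : ∀ j, Polynomial.derivative^[j] p ≠ 0 →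
    (Polynomial.derivative^[j] p).natDegree = p.natDegree - j := by
  intro j
  induction j with
  | zero => intro _; simp
  | succ j ih =>
    intro hne
    rw [Function.iterate_succ_apply'] at hne ⊢
    have hq : Polynomial.derivative^[j] p ≠ 0 := fun h0 => hne (by rw [h0]; simp)
    have h0 : (Polynomial.derivative^[j] p).natDegree ≠ 0 := fun h0 =>
      hne (derivative_of_natDegree_zero h0)
    have hdd := degree_derivative_eq (Polynomial.derivative^[j] p) (Nat.pos_of_ne_zero h0)
    have h2 := natDegree_eq_of_degree_eq_some hdd
    rw [h2, ih hq]
    omega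

/-- Takagi's theorem on the zeros of the differential composition f(D)g. -/
theorem takagi (f g : Polynomial ℂ) (m n r : ℕ) (hm : f.natDegree = m)
    (hn : g.natDegree = n) (hr : r ≤ m) (a : ℂ) (ha : a ≠ 0)
    (αs : Fin (m - r) → ℂ) (hαs : ∀ i, αs i ≠ 0)
    (hf : f = Polynomial.C a * (∏ i, (Polynomial.X - Polynomial.C (αs i))) * Polynomial.X ^ r)
    (h : Polynomial ℂ)
    (hh : h = f.sum fun i c => Polynomial.C c * (Polynomial.derivative^[i] g)) :
    h = 0 ∨ ∀ z : ℂ, h.eval z = 0 →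
      ∃ w ∈ convexHull ℝ (g.roots.toFinset : Set ℂ), ∃ t : Fin (m - r) → ℝ,
        (∀ i, 0 ≤ t i ∧ t i ≤ (n : ℝ) - r) ∧ z = w + ∑ i, ((t i : ℂ) * (αs i)⁻¹) := by
  classical
  have h3 : h = a • ((Polynomial.aeval (Polynomial.derivative : Module.End ℂ (Polynomial ℂ))
      (∏ i, (X - C (αs i)))) (Polynomial.derivative^[r] g)) := by
    have h1 : h = (Polynomial.aeval
        (Polynomial.derivative : Module.End ℂ (Polynomial ℂ)) f) g := by
      rw [hh, Polynomial.aeval_endomorphism]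
      simp [Module.End.pow_apply, smul_eq_C_mul]
    rw [h1, hf, map_mul, map_mul, map_pow, Polynomial.aeval_X, Polynomial.aeval_C]
    rw [Module.End.mul_apply, Module.End.mul_apply, Module.algebraMap_end_apply,
      Module.End.pow_apply]
  by_cases hq0 : Polynomial.derivative^[r] g = 0
  · left
    rw [h3, hq0, map_zero, smul_zero]
  · right
    intro z hz
    obtain ⟨hQne, hQdeg, hroots⟩ := prodB (m - r) αs hαs _ hq0
    have hQz : ((Polynomial.aeval (Polynomial.derivative : Module.End ℂ (Polynomial ℂ))
        (∏ i, (X - C (αs i)))) (Polynomial.derivative^[r] g)).eval z = 0 := by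
      rw [h3, smul_eq_C_mul, eval_mul, eval_C] at hz
      exact (mul_eq_zero.mp hz).resolve_left ha
    obtain ⟨w, hw, t, hbounds, hzeq⟩ := hroots z hQz
    have hrn : r ≤ n := by
      by_contra hrn
      exact hq0 (iterate_derivative_eq_zero (by omega : g.natDegree < r))
    have hdeg : (Polynomial.derivative^[r] g).natDegree = n - r := by
      rw [iter_deg g r hq0, hn]
    refine ⟨w, ?_, t, ?_, hzeq⟩
    · have hsub : (((Polynomial.derivative^[r] g).roots.toFinset : Finset ℂ) : Set ℂ)
          ⊆ convexHull ℝ (g.roots.toFinset : Set ℂ) := by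
        intro x hx
        simp only [Finset.mem_coe, Multiset.mem_toFinset, mem_roots hq0] at hx
        exact gaussLucas g r hq0 x hx
      exact convexHull_min hsub (convex_convexHull ℝ _) hw
    · intro i
      refine ⟨(hbounds i).1, ?_⟩
      have hb := (hbounds i).2
      rw [hdeg, Nat.cast_sub hrn] at hb
      exact hb
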